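/- Let G₁ be a finite-index subgroup of a group G, let H₁ ≤ G₁ and H₂ ≤ G be subgroups, and let g₁,…,g_k be representatives of the left cosets of G₁ in G. Suppose that for each i such that g_i⁻¹H₂g_i ≤ G₁, the subgroup H₁ is con-separated from g_i⁻¹H₂g_i within G₁. Then H₁ is con-separated from H₂ within G. -/

import Mathlib

/-- The conjugate subgroup `c⁻¹ H c`. -/
def conjBy {G : Type*} [Group G] (c : G) (H : Subgroup G) : Subgroup G :=
  H.map (MulAut.conj c⁻¹).toMonoidHom

/-- `H₁` is con-separated from `H₂` within the subgroup `G₁` of the ambient group: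
there is a subgroup `D ≤ G₁` of finite index in `G₁` containing `H₁` such that no
`G₁`-conjugate of `H₂` is contained in `D`. -/
def ConSepWithin {G : Type*} [Group G] (G₁ H₁ H₂ : Subgroup G) : Prop :=
  ∃ D : Subgroup G, D ≤ G₁ ∧ D.relIndex G₁ ≠ 0 ∧ H₁ ≤ D ∧
    ∀ g ∈ G₁, ¬ conjBy g H₂ ≤ D

lemma mem_conjBy {G : Type*} [Group G] {H : Subgroup G} {c y : G} :
    y ∈ conjBy c H ↔ c * y * c⁻¹ ∈ H := by
  rw [conjBy, Subgroup.mem_map_equiv]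
  simp [MulAut.conj, mul_assoc]

lemma conjBy_mul {G : Type*} [Group G] (a b : G) (H : Subgroup G) :
    conjBy (a * b) H = conjBy b (conjBy a H) := by
  ext y
  simp only [mem_conjBy, mul_inv_rev]
  group

lemma conjBy_mono {G : Type*} [Group G] (c : G) {H K : Subgroup G} (h : H ≤ K) :
    conjBy c H ≤ conjBy c K := by
  intro y hy
  rw [mem_conjBy] at *
  exact h hy

lemma conjBy_self {G : Type*} [Group G] {G₁ : Subgroup G} {h : G} (hh : h ∈ G₁) :
    conjBy h G₁ = G₁ := by
  ext y
  rw [mem_conjBy]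
  exact ⟨fun hy => by simpa [mul_assoc] using mul_mem (mul_mem (inv_mem hh) hy) hh,
    fun hy => mul_mem (mul_mem hh hy) (inv_mem hh)⟩

/-- Con-separation passes from a finite index subgroup to the ambient group. -/
theorem stmt_5 {G : Type*} [Group G] (G₁ H₁ H₂ : Subgroup G)
    (hfin : G₁.index ≠ 0) (hH₁ : H₁ ≤ G₁)
    (k : ℕ) (g : Fin k → G)
    (hreps : ∀ x : G, ∃ (i : Fin k), ∃ h ∈ G₁, x = g i * h)
    (hsep : ∀ i : Fin k, conjBy (g i) H₂ ≤ G₁ →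
      ConSepWithin G₁ H₁ (conjBy (g i) H₂)) :
    ∃ D : Subgroup G, D.index ≠ 0 ∧ H₁ ≤ D ∧ ∀ x : G, ¬ conjBy x H₂ ≤ D := by
  classical
  choose W hWle hWrel hWH₁ hWnc using hsep
  set D' : Fin k → Subgroup G :=
    fun i => if hi : conjBy (g i) H₂ ≤ G₁ then W i hi else ⊤ with hD'
  refine ⟨G₁ ⊓ ⨅ i, D' i, ?_, ?_, ?_⟩
  · apply Subgroup.index_inf_ne_zero hfin
    apply Subgroup.index_iInf_ne_zero
    intro i
    by_cases hi : conjBy (g i) H₂ ≤ G₁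
    · simp only [hD', dif_pos hi]
      rw [← Subgroup.relIndex_mul_index (hWle i hi)]
      exact mul_ne_zero (hWrel i hi) hfin
    · simp [hD', dif_neg hi, Subgroup.index_top]
  · refine le_inf hH₁ (le_iInf fun i => ?_)
    by_cases hi : conjBy (g i) H₂ ≤ G₁
    · simpa [hD', dif_pos hi] using hWH₁ i hi
    · simp [hD', dif_neg hi]
  · intro x hx
    obtain ⟨i, h, hh, rfl⟩ := hreps x
    have hxG₁ : conjBy (g i * h) H₂ ≤ G₁ := hx.trans inf_le_left
    have hi : conjBy (g i) H₂ ≤ G₁ := by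
      have : conjBy h⁻¹ (conjBy (g i * h) H₂) ≤ conjBy h⁻¹ G₁ := conjBy_mono _ hxG₁
      rw [← conjBy_mul, conjBy_self (inv_mem hh)] at this
      simpa using this
    have hD : conjBy h (conjBy (g i) H₂) ≤ W i hi := by
      rw [← conjBy_mul]
      refine hx.trans ((inf_le_right).trans ?_)
      have := iInf_le D' i
      simpa [hD', dif_pos hi] using this
    exact hWnc i hi h hh hD
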